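/- Let d > 2 and let X_n ⊂ ℝ^d be the 2^{d−1}-point design consisting of all points (±1/2, …, ±1/2) having an even number of negative coordinates (the half-fraction of the vertices of the cube [−1/2, 1/2]^d of maximum resolution). Then the covering radius of the cube X = [−1,1]^d for this design equals √(d+8)/2; that is, max_{x ∈ [−1,1]^d} min_{y ∈ X_n} ‖x − y‖ = √(d+8)/2. -/

import Mathlib

open Set

open Classical in
/-- The `2^{d-1}` design of maximum resolution: the points of `{-1/2, 1/2}^d` whose
coordinates contain an even number of entries equal to `-1/2`. -/
noncomputable def maxResDesign (d : ℕ) : Set (EuclideanSpace ℝ (Fin d)) :=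
  {y | (∀ i, y i = 1/2 ∨ y i = -(1/2)) ∧
    Even (Finset.univ.filter (fun i : Fin d => y i = -(1/2))).card}

/-- The cube `[-1,1]^d` in `ℝ^d`. -/
def bigCube (d : ℕ) : Set (EuclideanSpace ℝ (Fin d)) :=
  {x | ∀ i, x i ∈ Set.Icc (-1 : ℝ) 1}

section auxLemmas

lemma sqrtAux (r : ℝ) (hr : 0 ≤ r) : Real.sqrt (r / 4) = Real.sqrt r / 2 := by
  rw [Real.sqrt_div hr, show (4:ℝ) = 2^2 by norm_num, Real.sqrt_sq (by norm_num : (0:ℝ) ≤ 2)]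

lemma distSqSum (d : ℕ) (x y : EuclideanSpace ℝ (Fin d)) :
    dist x y = Real.sqrt (∑ i, (x i - y i)^2) := by
  rw [EuclideanSpace.dist_eq]
  congr 1
  refine Finset.sum_congr rfl fun i _ => ?_
  rw [Real.dist_eq, sq_abs]

open Classical Metric

lemma designNonempty (d : ℕ) : (maxResDesign d).Nonempty := by
  refine ⟨WithLp.toLp 2 (fun _ => 1/2 : Fin d → ℝ), fun i => Or.inl rfl, ?_⟩
  have h : (Finset.univ.filter (fun i : Fin d => (1:ℝ)/2 = -(1/2))) = ∅ := by
    apply Finset.filter_eq_empty_iff.mpr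
    intro i _
    norm_num
  rw [h, Finset.card_empty]
  exact Even.zero

lemma ubPoint (d : ℕ) (hd : 0 < d) (x : EuclideanSpace ℝ (Fin d)) (hx : x ∈ bigCube d) :
    Metric.infDist x (maxResDesign d) ≤ Real.sqrt ((d : ℝ) + 8) / 2 := by
  classical
  set s : EuclideanSpace ℝ (Fin d) := WithLp.toLp 2 (fun i => if 0 ≤ x i then 1/2 else -(1/2) : Fin d → ℝ) with hsdef
  have hs : ∀ i, s i = if 0 ≤ x i then 1/2 else -(1/2) := fun i => rfl
  have hterm : ∀ i, (x i - s i)^2 ≤ 1/4 := by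
    intro i
    have h1 := (hx i).1
    have h2 := (hx i).2
    rw [hs i]
    by_cases h : 0 ≤ x i
    · rw [if_pos h]; nlinarith
    · rw [if_neg h]; push_neg at h; nlinarith
  rw [← sqrtAux _ (by positivity)]
  set F : Finset (Fin d) := Finset.univ.filter (fun i : Fin d => s i = -(1/2)) with hF
  by_cases hpar : Even F.card
  · -- use y = s
    have hmem : s ∈ maxResDesign d := by
      refine ⟨fun i => ?_, hpar⟩
      rw [hs i]
      by_cases h : 0 ≤ x i
      · exact Or.inl (if_pos h)
      · exact Or.inr (if_neg h)
    refine le_trans (Metric.infDist_le_dist_of_mem hmem) ?_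
    rw [distSqSum]
    apply Real.sqrt_le_sqrt
    calc ∑ i, (x i - s i)^2 ≤ ∑ _i : Fin d, (1/4 : ℝ) := Finset.sum_le_sum (fun i _ => hterm i)
      _ = d * (1/4) := by rw [Finset.sum_const, Finset.card_univ, Fintype.card_fin, nsmul_eq_mul]
      _ ≤ ((d : ℝ) + 8)/4 := by ring_nf; linarith
  · -- flip at i₀
    set i₀ : Fin d := ⟨0, hd⟩ with hi₀
    set y : EuclideanSpace ℝ (Fin d) := WithLp.toLp 2 (fun i => if i = i₀ then -(s i) else s i) with hydef
    have hyr : ∀ i, y i = if i = i₀ then -(s i) else s i := fun i => rfl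
    have hsv : ∀ i, s i = 1/2 ∨ s i = -(1/2) := by
      intro i
      rw [hs i]
      by_cases h : 0 ≤ x i
      · exact Or.inl (if_pos h)
      · exact Or.inr (if_neg h)
    have hyv : ∀ i, y i = 1/2 ∨ y i = -(1/2) := by
      intro i
      rw [hyr i]
      by_cases h : i = i₀
      · rw [if_pos h]
        rcases hsv i with h2 | h2 <;> rw [h2]
        · exact Or.inr rfl
        · exact Or.inl (by norm_num)
      · rw [if_neg h]; exact hsv i
    have hFy : ∀ i : Fin d, i ≠ i₀ → (y i = -(1/2) ↔ s i = -(1/2)) := by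
      intro i h
      rw [hyr i, if_neg h]
    have hmem : y ∈ maxResDesign d := by
      refine ⟨hyv, ?_⟩
      rcases hsv i₀ with h | h
      · have hni : i₀ ∉ F := by
          rw [hF, Finset.mem_filter]
          rintro ⟨-, h2⟩
          rw [h] at h2
          norm_num at h2
        have heq : (Finset.univ.filter (fun i : Fin d => y i = -(1/2))) = insert i₀ F := by
          ext i
          rw [Finset.mem_insert, hF, Finset.mem_filter, Finset.mem_filter]
          by_cases hii : i = i₀
          · subst hii
            rw [hyr i₀, if_pos rfl, h]
            constructor
            · intro; exact Or.inl rfl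
            · intro; exact ⟨Finset.mem_univ i₀, by norm_num⟩
          · rw [hFy i hii]
            constructor
            · intro ⟨_, h2⟩; exact Or.inr ⟨Finset.mem_univ i, h2⟩
            · rintro (h2 | ⟨_, h2⟩)
              · exact absurd h2 hii
              · exact ⟨Finset.mem_univ i, h2⟩
        rw [heq, Finset.card_insert_of_notMem hni, Nat.even_add_one]
        simpa using hpar
      · have hii : i₀ ∈ F := by
          rw [hF, Finset.mem_filter]
          exact ⟨Finset.mem_univ i₀, h⟩
        have heq : (Finset.univ.filter (fun i : Fin d => y i = -(1/2))) = F.erase i₀ := by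
          ext i
          rw [Finset.mem_erase, hF, Finset.mem_filter, Finset.mem_filter]
          by_cases hii2 : i = i₀
          · subst hii2
            rw [hyr i₀, if_pos rfl, h]
            constructor
            · intro h2; norm_num at h2
            · rintro ⟨h2, -⟩; exact absurd rfl h2
          · rw [hFy i hii2]
            constructor
            · intro ⟨_, h2⟩; exact ⟨hii2, Finset.mem_univ i, h2⟩
            · rintro ⟨-, -, h2⟩; exact ⟨Finset.mem_univ i, h2⟩
        rw [heq, Finset.card_erase_of_mem hii]
        exact Nat.Odd.sub_odd (Nat.not_even_iff_odd.mp hpar) odd_one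
    refine le_trans (Metric.infDist_le_dist_of_mem hmem) ?_
    rw [distSqSum]
    apply Real.sqrt_le_sqrt
    have hterm0 : (x i₀ - y i₀)^2 ≤ 9/4 := by
      have h1 := (hx i₀).1
      have h2 := (hx i₀).2
      rcases hyv i₀ with h | h <;> rw [h] <;> nlinarith
    rw [← Finset.add_sum_erase Finset.univ (fun i => (x i - y i)^2) (Finset.mem_univ i₀)]
    have htermy : ∀ i ∈ Finset.univ.erase i₀, (x i - y i)^2 ≤ 1/4 := by
      intro i hi
      have hne : i ≠ i₀ := (Finset.mem_erase.mp hi).1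
      rw [hyr i, if_neg hne]
      exact hterm i
    calc (x i₀ - y i₀)^2 + ∑ i ∈ Finset.univ.erase i₀, (x i - y i)^2
        ≤ 9/4 + ∑ _i ∈ Finset.univ.erase i₀, (1/4 : ℝ) :=
          add_le_add hterm0 (Finset.sum_le_sum htermy)
      _ = 9/4 + ((d : ℝ) - 1) * (1/4) := by
          rw [Finset.sum_const, Finset.card_erase_of_mem (Finset.mem_univ i₀),
            Finset.card_univ, Fintype.card_fin, nsmul_eq_mul]
          have h1 : (1:ℕ) ≤ d := hd
          push_cast [Nat.cast_sub h1]
          ring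
      _ = ((d : ℝ) + 8)/4 := by ring

lemma lbPoint (d : ℕ) (hd : 0 < d) (x y : EuclideanSpace ℝ (Fin d))
    (hx : ∀ i, x i = if i = (⟨0, hd⟩ : Fin d) then (-1 : ℝ) else 1)
    (hy : y ∈ maxResDesign d) :
    Real.sqrt ((d : ℝ) + 8) / 2 ≤ dist x y := by
  classical
  set i₀ : Fin d := ⟨0, hd⟩ with hi₀
  obtain ⟨hyv, hpar⟩ := hy
  have hmis : ∃ j : Fin d, y j ≠ (if j = i₀ then -(1/2 : ℝ) else 1/2) := by
    by_contra h
    push_neg at h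
    have heq : (Finset.univ.filter (fun i : Fin d => y i = -(1/2))) = {i₀} := by
      ext i
      rw [Finset.mem_filter, Finset.mem_singleton]
      constructor
      · rintro ⟨-, hyi⟩
        by_contra hne
        have h2 := h i
        rw [if_neg hne] at h2
        rw [h2] at hyi
        norm_num at hyi
      · intro hi
        subst hi
        have h2 := h i₀
        rw [if_pos rfl] at h2
        exact ⟨Finset.mem_univ i₀, h2⟩
    rw [heq, Finset.card_singleton] at hpar
    exact (Nat.not_even_iff_odd.mpr odd_one) hpar
  obtain ⟨j, hj⟩ := hmis
  have hterm : ∀ i, (1/4 : ℝ) ≤ (x i - y i)^2 := by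
    intro i
    rw [hx i]
    rcases hyv i with h | h <;> rw [h] <;> by_cases hi : i = i₀ <;>
      first
        | (rw [if_pos hi]; norm_num)
        | (rw [if_neg hi]; norm_num)
  have htermj : (9/4 : ℝ) ≤ (x j - y j)^2 := by
    rw [hx j]
    by_cases hjc : j = i₀
    · have hyj : y j = 1/2 := by
        rcases hyv j with h | h
        · exact h
        · exact absurd (by rw [if_pos hjc]; exact h) hj
      rw [if_pos hjc, hyj]
      norm_num
    · have hyj : y j = -(1/2) := by
        rcases hyv j with h | h
        · exact absurd (by rw [if_neg hjc]; exact h) hj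
        · exact h
      rw [if_neg hjc, hyj]
      norm_num
  rw [distSqSum, ← sqrtAux _ (by positivity)]
  apply Real.sqrt_le_sqrt
  rw [← Finset.add_sum_erase Finset.univ (fun i => (x i - y i)^2) (Finset.mem_univ j)]
  have hsum : ((d : ℝ) - 1) * (1/4) ≤ ∑ i ∈ Finset.univ.erase j, (x i - y i)^2 := by
    calc ((d : ℝ) - 1) * (1/4) = ∑ _i ∈ Finset.univ.erase j, (1/4 : ℝ) := by
          rw [Finset.sum_const, Finset.card_erase_of_mem (Finset.mem_univ j),
            Finset.card_univ, Fintype.card_fin, nsmul_eq_mul]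
          have h1 : (1:ℕ) ≤ d := hd
          push_cast [Nat.cast_sub h1]
          ring
      _ ≤ _ := Finset.sum_le_sum (fun i _ => hterm i)
  calc ((d : ℝ) + 8)/4 = 9/4 + ((d:ℝ) - 1) * (1/4) := by ring
    _ ≤ (x j - y j)^2 + ∑ i ∈ Finset.univ.erase j, (x i - y i)^2 := add_le_add htermj hsum

end auxLemmas

/-- For `d > 2`, the covering radius of the cube `[-1,1]^d` for the `2^{d-1}` design of
maximum resolution concentrated at the points `(±1/2, …, ±1/2)` equals `√(d+8)/2`. -/
theorem coverRadius_maxResDesign (d : ℕ) (hd : 2 < d) :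
    (⨆ p : bigCube d, Metric.infDist (p : EuclideanSpace ℝ (Fin d)) (maxResDesign d))
      = Real.sqrt ((d : ℝ) + 8) / 2 := by
  have hd0 : 0 < d := by omega
  have hub : ∀ p : bigCube d,
      Metric.infDist (p : EuclideanSpace ℝ (Fin d)) (maxResDesign d)
        ≤ Real.sqrt ((d : ℝ) + 8) / 2 := fun ⟨p, hp⟩ => ubPoint d hd0 p hp
  have hbdd : BddAbove (Set.range fun p : bigCube d =>
      Metric.infDist (p : EuclideanSpace ℝ (Fin d)) (maxResDesign d)) := by
    refine ⟨Real.sqrt ((d : ℝ) + 8) / 2, ?_⟩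
    rintro r ⟨p, rfl⟩
    exact hub p
  set x : EuclideanSpace ℝ (Fin d) :=
    WithLp.toLp 2 (fun i : Fin d => if i = (⟨0, hd0⟩ : Fin d) then (-1 : ℝ) else 1) with hxdef
  have hxr : ∀ i, x i = if i = (⟨0, hd0⟩ : Fin d) then (-1 : ℝ) else 1 := fun i => rfl
  have hxc : x ∈ bigCube d := by
    intro i
    rw [Set.mem_Icc, hxr i]
    by_cases h : i = (⟨0, hd0⟩ : Fin d)
    · rw [if_pos h]; norm_num
    · rw [if_neg h]; norm_num
  haveI : Nonempty (bigCube d) := ⟨⟨x, hxc⟩⟩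
  apply le_antisymm
  · exact ciSup_le hub
  · have hlb : Real.sqrt ((d : ℝ) + 8) / 2 ≤ Metric.infDist x (maxResDesign d) := by
      by_contra h
      push_neg at h
      rw [Metric.infDist_lt_iff (designNonempty d)] at h
      obtain ⟨y, hy, hlt⟩ := h
      exact absurd hlt (not_lt.mpr (lbPoint d hd0 x y hxr hy))
    exact le_trans hlb (le_ciSup hbdd ⟨x, hxc⟩)
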